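/- Let k ≥ 12 be an integer, let φ be a real number, set c = exp((φ + π/k)√−1), let A = { exp(ψ√−1) : ψ ≡ φ + μ (mod 2π), 0 ≤ μ < 2π/k } be the semi-open arc of the unit circle of length 2π/k starting at angle φ, and let Γ′ = { r·exp(ψ√−1) : r ≥ 0, ψ ≡ φ − 2π/k + μ (mod 2π), 0 ≤ μ < 6π/k }. Set θ = 2·sin(π/(2k))/sin(3π/k). Then 0 < θ < 1, and for every t ∈ A and every s ∈ ℂ \ Γ′ one has |t − c| ≤ θ·|s − c|; i.e., the arc A and the exterior of Γ′ are (θ, c)-separated. -/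

import Mathlib

lemma abs_sq_aux (r a b : ℝ) :
    (‖(r:ℂ) * Complex.exp ((a:ℂ) * Complex.I) - Complex.exp ((b:ℂ) * Complex.I)‖)^2
      = r^2 - 2*r*Real.cos (a-b) + 1 := by
  rw [Complex.sq_norm, Complex.normSq_apply]
  simp [Complex.exp_ofReal_mul_I_re, Complex.exp_ofReal_mul_I_im, Real.cos_sub]
  nlinarith [Real.sin_sq_add_cos_sq a, Real.sin_sq_add_cos_sq b]

lemma abs_sq_aux1 (a b : ℝ) :
    (‖Complex.exp ((a:ℂ) * Complex.I) - Complex.exp ((b:ℂ) * Complex.I)‖)^2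
      = 2 - 2*Real.cos (a-b) := by
  have h := abs_sq_aux 1 a b
  simp only [Complex.ofReal_one, one_mul] at h
  rw [h]; ring

lemma angle_reduce (x : ℝ) : ∃ δ : ℝ, 0 ≤ δ ∧ δ < 2*Real.pi ∧ ∀ b : ℝ,
    Complex.exp (((b + δ : ℝ) : ℂ) * Complex.I) = Complex.exp (((b + x : ℝ) : ℂ) * Complex.I) := by
  have hπ := Real.pi_pos
  have h2π : (0:ℝ) < 2*Real.pi := by linarith
  set n : ℤ := ⌊x / (2*Real.pi)⌋ with hn
  have h1 : (n:ℝ) * (2*Real.pi) ≤ x := (le_div_iff₀ h2π).mp (Int.floor_le _)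
  have h2 : x < ((n:ℝ) + 1) * (2*Real.pi) := (div_lt_iff₀ h2π).mp (Int.lt_floor_add_one _)
  refine ⟨x - 2*Real.pi*n, by linarith, by linarith, fun b => ?_⟩
  have key : ((b + (x - 2*Real.pi*(n:ℝ)) : ℝ) : ℂ) * Complex.I
      = ((b + x : ℝ) : ℂ) * Complex.I - (n:ℤ) * (2 * (Real.pi:ℂ) * Complex.I) := by
    push_cast; ring
  rw [key, Complex.exp_sub, Complex.exp_int_mul_two_pi_mul_I, div_one]

lemma real_ineq (p r β : ℝ) (hr : 0 ≤ r) (hp1 : 0 < p) (hp2 : p ≤ Real.pi/4)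
    (hβ1 : p ≤ β) (hβ2 : β ≤ 2*Real.pi - p) :
    Real.sin p ^ 2 ≤ r^2 - 2*r*Real.cos β + 1 := by
  have hπ := Real.pi_pos
  have hsp0 : 0 ≤ Real.sin p := Real.sin_nonneg_of_nonneg_of_le_pi (le_of_lt hp1) (by linarith)
  have hsp1 : Real.sin p ≤ 1 := Real.sin_le_one _
  by_cases hcb : Real.cos β ≤ 0
  · nlinarith
  · push_neg at hcb
    have hcase : β < Real.pi / 2 ∨ 3 * Real.pi / 2 < β := by
      by_contra h
      push_neg at h
      have := Real.cos_nonpos_of_pi_div_two_le_of_le h.1 (by linarith)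
      linarith
    have h1 : Real.sin p ≤ |Real.sin β| := by
      rcases hcase with h | h
      · exact (Real.sin_le_sin_of_le_of_le_pi_div_two (by linarith) (le_of_lt h) hβ1).trans
          (le_abs_self _)
      · have hsb : Real.sin β = - Real.sin (2 * Real.pi - β) := by
          rw [Real.sin_sub]; simp
        have hle : Real.sin p ≤ Real.sin (2 * Real.pi - β) :=
          Real.sin_le_sin_of_le_of_le_pi_div_two (by linarith) (by linarith) (by linarith)
        rw [hsb, abs_neg]
        exact hle.trans (le_abs_self _)
    have h2 : Real.sin p ^ 2 ≤ Real.sin β ^ 2 := by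
      nlinarith [sq_abs (Real.sin β), abs_nonneg (Real.sin β)]
    have h3 := Real.sin_sq_add_cos_sq β
    nlinarith [sq_nonneg (r - Real.cos β)]


/-- Part (ii) of Theorem 7.3 of the paper: in the uniform `k`-partition of the
unit circle (`k ≥ 12`), the arc `A = {e^{(φ+μ)i} : 0 ≤ μ < 2π/k}` and the
exterior of the union `Γ'` of its sector with the two adjacent sectors are
`(θ, c)`-separated about the arc's midpoint `c = e^{(φ + π/k)i}`, with
`θ = 2 sin(π/(2k))/sin(3π/k)`, and `0 < θ < 1`. -/
theorem arc_and_sector_exterior_separated (k : ℕ) (hk : 12 ≤ k) (φ : ℝ)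
    (c : ℂ) (hc : c = Complex.exp ((φ + Real.pi / k) * Complex.I))
    (θ : ℝ) (hθ : θ = 2 * Real.sin (Real.pi / (2 * k)) / Real.sin (3 * Real.pi / k)) :
    0 < θ ∧ θ < 1 ∧
      ∀ t ∈ {w : ℂ | ∃ μ : ℝ, 0 ≤ μ ∧ μ < 2 * Real.pi / k ∧
          w = Complex.exp ((φ + μ) * Complex.I)},
      ∀ s ∉ {w : ℂ | ∃ r : ℝ, 0 ≤ r ∧ ∃ μ : ℝ, 0 ≤ μ ∧ μ < 6 * Real.pi / k ∧
          w = r * Complex.exp ((φ - 2 * Real.pi / k + μ) * Complex.I)},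
        ‖t - c‖ ≤ θ * ‖s - c‖ := by
  have hπ := Real.pi_pos
  have hπ6 : Real.pi < 6 := by linarith [Real.pi_lt_d2]
  have hK : (12:ℝ) ≤ (k:ℝ) := by exact_mod_cast hk
  have hK0 : (0:ℝ) < (k:ℝ) := by linarith
  have e2 : 2 * Real.pi / (k:ℝ) = 2 * (Real.pi / k) := by ring
  have e3 : 3 * Real.pi / (k:ℝ) = 3 * (Real.pi / k) := by ring
  have e6 : 6 * Real.pi / (k:ℝ) = 6 * (Real.pi / k) := by ring
  have epk : Real.pi / (k:ℝ) = 2 * (Real.pi / (2*k)) := by field_simp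
  have hpk_pos : 0 < Real.pi / (k:ℝ) := by positivity
  have hpk_le : Real.pi / (k:ℝ) ≤ Real.pi / 12 := by
    apply div_le_div_of_nonneg_left (le_of_lt hπ) (by norm_num) hK
  have h3k_pos : 0 < 3 * Real.pi / k := by positivity
  have h3k_le : 3 * Real.pi / k ≤ Real.pi / 4 := by rw [e3]; linarith
  have hsin3_pos : 0 < Real.sin (3 * Real.pi / k) :=
    Real.sin_pos_of_pos_of_lt_pi h3k_pos (by linarith)
  have hsin3_le1 : Real.sin (3 * Real.pi / k) ≤ 1 := Real.sin_le_one _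
  have hhalf_pos : 0 < Real.pi / (2*(k:ℝ)) := by positivity
  have hsinh_pos : 0 < Real.sin (Real.pi / (2 * k)) :=
    Real.sin_pos_of_pos_of_lt_pi hhalf_pos (by linarith [epk, hpk_le])
  have hθ_pos : 0 < θ := by rw [hθ]; positivity
  have hkey : 2 * Real.sin (Real.pi / (2 * k)) < Real.sin (3 * Real.pi / k) := by
    have h1 : Real.sin (Real.pi / (2*k)) < Real.pi / (2*k) := Real.sin_lt hhalf_pos
    have h2 : 2 / Real.pi * (3 * Real.pi / k) ≤ Real.sin (3 * Real.pi / k) :=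
      Real.mul_le_sin (le_of_lt h3k_pos) (by linarith)
    have h3 : 2 / Real.pi * (3 * Real.pi / k) = 6 / k := by field_simp; ring
    have h5 : Real.pi / k < 6 / k := by gcongr
    rw [h3] at h2
    linarith
  have hθ1 : θ < 1 := by rw [hθ, div_lt_one hsin3_pos]; exact hkey
  refine ⟨hθ_pos, hθ1, ?_⟩
  rintro t ⟨μ, hμ0, hμ2, rfl⟩ s hs
  rw [e2] at hμ2
  -- bound |t - c| ≤ 2 sin(π/(2k))
  have ht_sq : (‖Complex.exp ((φ+μ) * Complex.I) - c‖)^2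
      = 2 - 2 * Real.cos (μ - Real.pi / k) := by
    rw [hc]
    have h := abs_sq_aux1 (φ+μ) (φ + Real.pi/k)
    rw [show φ+μ-(φ+Real.pi/k) = μ - Real.pi/k by ring] at h
    rw [← h]
    norm_cast
  have hcosπk : Real.cos (Real.pi / k) = 1 - 2 * Real.sin (Real.pi / (2*k))^2 := by
    have h := Real.cos_sq (Real.pi / (2*k))
    rw [← epk] at h
    have h3 := Real.sin_sq_add_cos_sq (Real.pi / (2*k))
    linarith
  have hcosmono : Real.cos (Real.pi / k) ≤ Real.cos (μ - Real.pi / k) := by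
    rw [← Real.cos_abs (μ - Real.pi / k)]
    apply Real.cos_le_cos_of_nonneg_of_le_pi (abs_nonneg _) (by linarith)
    rw [abs_le]
    constructor <;> linarith
  have ht_le : ‖Complex.exp ((φ+μ) * Complex.I) - c‖
      ≤ 2 * Real.sin (Real.pi / (2*k)) := by
    apply (pow_le_pow_iff_left₀ (norm_nonneg _) (by positivity) two_ne_zero).mp
    rw [ht_sq]
    nlinarith
  -- bound sin(3π/k) ≤ |s - c|
  have hs_ne : s ≠ 0 := by
    rintro rfl
    exact hs ⟨0, le_refl _, 0, le_refl _, by positivity, by simp⟩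
  obtain ⟨δ, hδ0, hδ2, hδeq⟩ := angle_reduce (s.arg - (φ - 2 * Real.pi / k))
  have hs_eq : s = (‖s‖ : ℂ) * Complex.exp (((φ - 2 * Real.pi / k + δ : ℝ) : ℂ) * Complex.I) := by
    rw [hδeq (φ - 2 * Real.pi / k)]
    rw [show φ - 2 * Real.pi / k + (s.arg - (φ - 2 * Real.pi / k)) = s.arg by ring]
    exact (Complex.norm_mul_exp_arg_mul_I s).symm
  have hδge : 6 * Real.pi / k ≤ δ := by
    by_contra h
    push_neg at h
    refine hs ⟨‖s‖, norm_nonneg s, δ, hδ0, h, ?_⟩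
    have hcast2 : ((φ:ℂ) - 2*(Real.pi:ℂ)/(k:ℂ) + (δ:ℂ)) * Complex.I
        = ((φ - 2*Real.pi/k + δ : ℝ):ℂ) * Complex.I := by push_cast; ring
    rw [hcast2]
    exact hs_eq
  rw [e6] at hδge
  -- now the distance bound
  have hr0 : 0 ≤ ‖s‖ := norm_nonneg s
  have hs_sq : (‖s - c‖)^2
      = (‖s‖)^2 - 2*(‖s‖)*Real.cos (δ - 3 * Real.pi / k) + 1 := by
    have h := abs_sq_aux (‖s‖) (φ - 2 * Real.pi / k + δ) (φ + Real.pi/k)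
    rw [show φ - 2 * Real.pi / k + δ - (φ + Real.pi/k) = δ - 3 * Real.pi / k by ring] at h
    have hcast : ((φ:ℂ) + (Real.pi:ℂ)/(k:ℂ)) * Complex.I
        = ((φ + Real.pi/k : ℝ):ℂ) * Complex.I := by push_cast; ring
    conv_lhs => rw [hs_eq, hc, hcast]
    exact h
  obtain ⟨β, hβdef⟩ : ∃ β : ℝ, β = δ - 3 * Real.pi / k := ⟨_, rfl⟩
  rw [← hβdef] at hs_sq
  have hmain : Real.sin (3 * Real.pi / k)^2 ≤ (‖s - c‖)^2 := by
    rw [hs_sq]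
    apply real_ineq _ _ _ hr0 h3k_pos h3k_le (by rw [hβdef, e3]; linarith)
      (by rw [hβdef, e3]; linarith)
  have hs_ge : Real.sin (3 * Real.pi / k) ≤ ‖s - c‖ :=
    (pow_le_pow_iff_left₀ (le_of_lt hsin3_pos) (norm_nonneg _) two_ne_zero).mp hmain
  have hθs : θ * Real.sin (3 * Real.pi / k) = 2 * Real.sin (Real.pi / (2*k)) := by
    rw [hθ]; exact div_mul_cancel₀ _ hsin3_pos.ne'
  calc ‖Complex.exp ((φ+μ) * Complex.I) - c‖ ≤ 2 * Real.sin (Real.pi / (2*k)) := ht_le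
    _ = θ * Real.sin (3 * Real.pi / k) := hθs.symm
    _ ≤ θ * ‖s - c‖ := mul_le_mul_of_nonneg_left hs_ge (le_of_lt hθ_pos)
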